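/- Let m ≥ 1 be an integer and λ > 0. Define, for x₀ > 0 and y ∈ ℝ^m, I(x₀,y) = ∫₀^∞ e^{−λt}·(x₀/(2√π·t^{3/2}))·exp(−x₀²/(4t))·exp(−(2t)^m·|y|²/2) dt. Then there exists a constant c > 0 (depending only on m and λ) such that for all x₀ > 0 and y ∈ ℝ^m: I(x₀,y)² ≤ c·x₀^{−2} when |y| ≤ 1, and I(x₀,y)² ≤ c·x₀^{−4}·|y|^{−1/m} when |y| > 1. -/

import Mathlib

open Real MeasureTheory Set

lemma aux_exp_le_inv {u : ℝ} (hu : 0 < u) : Real.exp (-u) ≤ u⁻¹ := by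
  rw [Real.exp_neg]
  have h := Real.add_one_le_exp u
  exact inv_anti₀ hu (by linarith)

lemma aux_exp_le_rpow {u θ : ℝ} (hu : 0 < u) (hθ0 : 0 < θ) (hθ1 : θ ≤ 1) :
    Real.exp (-u) ≤ u ^ (-θ) := by
  rw [Real.exp_neg, Real.rpow_neg hu.le]
  refine inv_anti₀ (Real.rpow_pos_of_pos hu θ) ?_
  rcases le_total u 1 with h | h
  · exact (Real.rpow_le_one hu.le h hθ0.le).trans (Real.one_le_exp hu.le)
  · calc u ^ θ ≤ u ^ (1:ℝ) := Real.rpow_le_rpow_of_exponent_le h hθ1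
      _ = u := Real.rpow_one u
      _ ≤ Real.exp u := by linarith [Real.add_one_le_exp u]

lemma aux_exp_le_rpow32 {u : ℝ} (hu : 0 < u) : Real.exp (-u) ≤ 4 * u ^ (-(3:ℝ)/2) := by
  have h1 : Real.exp (-(u/2)) ≤ (u/2)⁻¹ := aux_exp_le_inv (by linarith)
  have h2 : Real.exp (-(u/2)) ≤ (u/2) ^ (-(2:ℝ)⁻¹) := by
    have := aux_exp_le_rpow (u := u/2) (θ := (2:ℝ)⁻¹) (by linarith) (by norm_num) (by norm_num)
    simpa using this
  have hu2 : (0:ℝ) < u/2 := by linarith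
  have key : Real.exp (-u) ≤ (u/2) ^ (-(3:ℝ)/2) := by
    have : Real.exp (-u) = Real.exp (-(u/2)) * Real.exp (-(u/2)) := by
      rw [← Real.exp_add]; ring_nf
    rw [this, show (-(3:ℝ)/2) = (-1) + (-(2:ℝ)⁻¹) by norm_num, Real.rpow_add hu2,
      Real.rpow_neg_one]
    exact mul_le_mul h1 h2 (Real.exp_nonneg _) (by positivity)
  have split : (u/2) ^ (-(3:ℝ)/2) = u ^ (-(3:ℝ)/2) * (2:ℝ) ^ ((3:ℝ)/2) := by
    rw [Real.div_rpow hu.le (by norm_num), show (-(3:ℝ)/2) = -((3:ℝ)/2) by norm_num,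
      Real.rpow_neg (by norm_num : (0:ℝ) ≤ 2)]
    field_simp
  have h28 : (2:ℝ) ^ ((3:ℝ)/2) ≤ 4 := by
    calc (2:ℝ) ^ ((3:ℝ)/2) ≤ (2:ℝ) ^ (2:ℝ) :=
          Real.rpow_le_rpow_of_exponent_le one_le_two (by norm_num)
      _ = 4 := by
          rw [show (2:ℝ) = ((2:ℕ):ℝ) by norm_num, Real.rpow_natCast]; norm_num
  calc Real.exp (-u) ≤ u ^ (-(3:ℝ)/2) * (2:ℝ) ^ ((3:ℝ)/2) := by rw [← split]; exact key
    _ ≤ u ^ (-(3:ℝ)/2) * 4 := by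
        have : (0:ℝ) ≤ u ^ (-(3:ℝ)/2) := Real.rpow_nonneg hu.le _
        nlinarith
    _ = 4 * u ^ (-(3:ℝ)/2) := by ring



/-- The partial Fourier transform (in modulus) of the normal derivative of the elliptic Green
kernel of the half-space `(0,∞) × ℝ^m`:
`I(x₀,y) = ∫₀^∞ e^{-λt} (x₀/(2√π t^{3/2})) exp(-x₀²/(4t)) exp(-(2t)^m |y|²/2) dt`. -/
noncomputable def ellipticFT (m : ℕ) (lam x₀ : ℝ) (y : EuclideanSpace ℝ (Fin m)) : ℝ :=
  ∫ t in Set.Ioi (0 : ℝ),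
    Real.exp (-lam * t) * (x₀ / (2 * Real.sqrt Real.pi * t ^ ((3 : ℝ) / 2)))
      * Real.exp (-x₀ ^ 2 / (4 * t)) * Real.exp (-(2 * t) ^ m * ‖y‖ ^ 2 / 2)

/-- Estimate (5.9): there is `c > 0` such that `I(x₀,y)² ≤ c x₀^{-2}` when `|y| ≤ 1` and
`I(x₀,y)² ≤ c x₀^{-4} |y|^{-1/m}` when `|y| > 1`. -/
theorem stmt8 (m : ℕ) (hm : 1 ≤ m) (lam : ℝ) (hlam : 0 < lam) :
    ∃ c : ℝ, 0 < c ∧ ∀ x₀ : ℝ, 0 < x₀ → ∀ y : EuclideanSpace ℝ (Fin m),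
      (‖y‖ ≤ 1 → (ellipticFT m lam x₀ y) ^ 2 ≤ c * x₀ ^ (-2 : ℝ)) ∧
      (1 < ‖y‖ → (ellipticFT m lam x₀ y) ^ 2 ≤ c * x₀ ^ (-4 : ℝ) * ‖y‖ ^ (-(1 : ℝ) / m)) := by
  have hπ : (0:ℝ) < Real.sqrt Real.pi := Real.sqrt_pos.mpr Real.pi_pos
  have hπ' : Real.sqrt Real.pi ≠ 0 := ne_of_gt hπ
  have hmR : (0:ℝ) < (m:ℝ) := by exact_mod_cast Nat.pos_of_ne_zero (by omega)
  have hmR' : (m:ℝ) ≠ 0 := ne_of_gt hmR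
  have hm1 : (1:ℝ) ≤ (m:ℝ) := by exact_mod_cast hm
  have hKint : IntegrableOn (fun t : ℝ => t ^ (-(1:ℝ)/2) * Real.exp (-lam * t)) (Ioi 0) := by
    have := integrableOn_rpow_mul_exp_neg_mul_rpow (p := 1) (s := -(1:ℝ)/2) (b := lam)
      (by norm_num) one_pos hlam
    simpa [Real.rpow_one] using this
  set K : ℝ := ∫ t in Ioi (0:ℝ), t ^ (-(1:ℝ)/2) * Real.exp (-lam * t) with hKdef
  have hK0 : 0 ≤ K := setIntegral_nonneg measurableSet_Ioi
    (fun t ht => mul_nonneg (Real.rpow_nonneg (le_of_lt ht) _) (Real.exp_nonneg _))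
  set C : ℝ := 16 * (K + 1) / Real.sqrt Real.pi with hCdef
  have hC : 0 < C := div_pos (by linarith) hπ
  refine ⟨C^2, by positivity, fun x₀ hx y => ?_⟩
  have hx0 : x₀ ≠ 0 := ne_of_gt hx
  set r : ℝ := ‖y‖ with hrdef
  have hr0 : (0:ℝ) ≤ r := norm_nonneg y
  -- nonnegativity of the integrand
  have hfnn : ∀ t : ℝ, t ∈ Ioi (0:ℝ) → 0 ≤ Real.exp (-lam * t)
      * (x₀ / (2 * Real.sqrt Real.pi * t ^ ((3:ℝ)/2)))
      * Real.exp (-x₀ ^ 2 / (4 * t)) * Real.exp (-(2 * t) ^ m * r ^ 2 / 2) := by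
    intro t ht
    have hs : (0:ℝ) ≤ t ^ ((3:ℝ)/2) := Real.rpow_nonneg (le_of_lt ht) _
    have hAB : (0:ℝ) ≤ x₀ / (2 * Real.sqrt Real.pi * t ^ ((3:ℝ)/2)) :=
      div_nonneg hx.le (mul_nonneg (by positivity) hs)
    exact mul_nonneg (mul_nonneg (mul_nonneg (Real.exp_nonneg _) hAB) (Real.exp_nonneg _))
      (Real.exp_nonneg _)
  have hI0 : 0 ≤ ellipticFT m lam x₀ y := by
    rw [ellipticFT]
    exact setIntegral_nonneg measurableSet_Ioi hfnn
  -- Case 1 bound: I ≤ 2K/(√π x₀)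
  have hb1 : ellipticFT m lam x₀ y ≤ 2 * K / (Real.sqrt Real.pi * x₀) := by
    have hmono : ellipticFT m lam x₀ y ≤ ∫ t in Ioi (0:ℝ),
        2 / (Real.sqrt Real.pi * x₀) * (t ^ (-(1:ℝ)/2) * Real.exp (-lam * t)) := by
      rw [ellipticFT]
      refine integral_mono_of_nonneg ?_ (hKint.const_mul _) ?_
      · filter_upwards [self_mem_ae_restrict measurableSet_Ioi] with t ht
        exact hfnn t ht
      · filter_upwards [self_mem_ae_restrict measurableSet_Ioi] with t htmem
        have ht : (0:ℝ) < t := htmem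
        have hs : (0:ℝ) < t ^ ((3:ℝ)/2) := Real.rpow_pos_of_pos ht _
        have hAB : (0:ℝ) ≤ Real.exp (-lam * t)
            * (x₀ / (2 * Real.sqrt Real.pi * t ^ ((3:ℝ)/2))) :=
          mul_nonneg (Real.exp_nonneg _)
            (div_nonneg hx.le (mul_nonneg (by positivity) hs.le))
        have hE1 : Real.exp (-x₀ ^ 2 / (4 * t)) ≤ 4 * t / x₀ ^ 2 := by
          have h := aux_exp_le_inv (u := x₀ ^ 2 / (4 * t)) (by positivity)
          rw [show -x₀ ^ 2 / (4 * t) = -(x₀ ^ 2 / (4 * t)) by ring]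
          refine h.trans ?_
          rw [inv_div]
        have hE2 : Real.exp (-(2 * t) ^ m * r ^ 2 / 2) ≤ 1 := by
          rw [Real.exp_le_one_iff]
          have h2t : (0:ℝ) ≤ (2 * t) ^ m := by positivity
          nlinarith [sq_nonneg r]
        calc Real.exp (-lam * t) * (x₀ / (2 * Real.sqrt Real.pi * t ^ ((3:ℝ)/2)))
              * Real.exp (-x₀ ^ 2 / (4 * t)) * Real.exp (-(2 * t) ^ m * r ^ 2 / 2)
            ≤ Real.exp (-lam * t) * (x₀ / (2 * Real.sqrt Real.pi * t ^ ((3:ℝ)/2)))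
              * (4 * t / x₀ ^ 2) * 1 :=
              mul_le_mul (mul_le_mul_of_nonneg_left hE1 hAB) hE2 (Real.exp_nonneg _)
                (mul_nonneg hAB (by positivity))
          _ = 2 / (Real.sqrt Real.pi * x₀) * (t ^ (-(1:ℝ)/2) * Real.exp (-lam * t)) := by
              rw [show (4:ℝ) * t = 4 * (t ^ (-(1:ℝ)/2) * t ^ ((3:ℝ)/2)) by
                rw [← Real.rpow_add ht]; norm_num]
              have hsne : t ^ ((3:ℝ)/2) ≠ 0 := ne_of_gt hs
              field_simp
              ring
    refine hmono.trans ?_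
    rw [MeasureTheory.integral_const_mul, ← hKdef]
    exact le_of_eq (by ring)
  -- Case 2 bound
  have hb2 : 1 < r → ellipticFT m lam x₀ y ≤
      (16 * K / Real.sqrt Real.pi) * (x₀⁻¹) ^ 2 * r ^ (-(1:ℝ)/m) := by
    intro hr
    have hrpos : (0:ℝ) < r := lt_trans one_pos hr
    have hmono : ellipticFT m lam x₀ y ≤ ∫ t in Ioi (0:ℝ),
        (16 / Real.sqrt Real.pi * (x₀⁻¹) ^ 2 * r ^ (-(1:ℝ)/m))
          * (t ^ (-(1:ℝ)/2) * Real.exp (-lam * t)) := by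
      rw [ellipticFT]
      refine integral_mono_of_nonneg ?_ (hKint.const_mul _) ?_
      · filter_upwards [self_mem_ae_restrict measurableSet_Ioi] with t ht
        exact hfnn t ht
      · filter_upwards [self_mem_ae_restrict measurableSet_Ioi] with t htmem
        have ht : (0:ℝ) < t := htmem
        have hs : (0:ℝ) < t ^ ((3:ℝ)/2) := Real.rpow_pos_of_pos ht _
        have hAB : (0:ℝ) ≤ Real.exp (-lam * t)
            * (x₀ / (2 * Real.sqrt Real.pi * t ^ ((3:ℝ)/2))) :=
          mul_nonneg (Real.exp_nonneg _)
            (div_nonneg hx.le (mul_nonneg (by positivity) hs.le))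
        have hE1 : Real.exp (-x₀ ^ 2 / (4 * t)) ≤ 32 * t ^ ((3:ℝ)/2) / x₀ ^ 3 := by
          have h := aux_exp_le_rpow32 (u := x₀ ^ 2 / (4 * t)) (by positivity)
          rw [show -x₀ ^ 2 / (4 * t) = -(x₀ ^ 2 / (4 * t)) by ring]
          refine h.trans ?_
          have h4 : ((4:ℝ) * t) ^ ((3:ℝ)/2) = 8 * t ^ ((3:ℝ)/2) := by
            rw [Real.mul_rpow (by norm_num) ht.le]
            congr 1
            rw [show (4:ℝ) = 2 ^ (2:ℕ) by norm_num, ← Real.rpow_natCast 2 2,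
              ← Real.rpow_mul (by norm_num),
              show ((2:ℕ):ℝ) * ((3:ℝ)/2) = ((3:ℕ):ℝ) by norm_num, Real.rpow_natCast]
            norm_num
          have hx3 : (x₀ ^ 2) ^ ((3:ℝ)/2) = x₀ ^ 3 := by
            rw [← Real.rpow_natCast x₀ 2, ← Real.rpow_mul hx.le,
              show ((2:ℕ):ℝ) * ((3:ℝ)/2) = ((3:ℕ):ℝ) by norm_num, Real.rpow_natCast]
          have : (x₀ ^ 2 / (4 * t)) ^ (-(3:ℝ)/2) = 8 * t ^ ((3:ℝ)/2) / x₀ ^ 3 := by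
            rw [show (-(3:ℝ)/2) = -((3:ℝ)/2) by norm_num,
              Real.rpow_neg (by positivity),
              Real.div_rpow (by positivity) (by positivity : (0:ℝ) ≤ 4 * t), inv_div,
              h4, hx3]
          rw [this]
          ring_nf
          exact le_refl _
        have hE2 : Real.exp (-(2 * t) ^ m * r ^ 2 / 2)
            ≤ t ^ (-(1:ℝ)/2) * r ^ (-(1:ℝ)/m) := by
          have htm : (0:ℝ) < t ^ m := pow_pos ht m
          have hu : (0:ℝ) < t ^ m * r ^ 2 := by positivity
          have hstep : -(2 * t) ^ m * r ^ 2 / 2 ≤ -(t ^ m * r ^ 2) := by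
            have h2m : (2:ℝ) ≤ 2 ^ m := by
              calc (2:ℝ) = 2 ^ 1 := (pow_one 2).symm
                _ ≤ 2 ^ m := pow_le_pow_right₀ one_le_two hm
            have hexp : ((2:ℝ) * t) ^ m = 2 ^ m * t ^ m := mul_pow 2 t m
            rw [hexp]
            nlinarith [mul_nonneg (mul_nonneg (sub_nonneg.mpr h2m) htm.le) (sq_nonneg r)]
          have hθ1 : 1 / (2 * (m:ℝ)) ≤ 1 := by
            rw [div_le_one (by positivity)]
            linarith
          calc Real.exp (-(2 * t) ^ m * r ^ 2 / 2) ≤ Real.exp (-(t ^ m * r ^ 2)) :=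
                Real.exp_le_exp.mpr hstep
            _ ≤ (t ^ m * r ^ 2) ^ (-(1 / (2 * (m:ℝ)))) :=
                aux_exp_le_rpow hu (by positivity) hθ1
            _ = t ^ (-(1:ℝ)/2) * r ^ (-(1:ℝ)/m) := by
                rw [Real.mul_rpow htm.le (sq_nonneg r), ← Real.rpow_natCast t m,
                  ← Real.rpow_natCast r 2, ← Real.rpow_mul ht.le, ← Real.rpow_mul hr0]
                congr 1
                · congr 1; field_simp
                · congr 1; field_simp; norm_num
        calc Real.exp (-lam * t) * (x₀ / (2 * Real.sqrt Real.pi * t ^ ((3:ℝ)/2)))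
              * Real.exp (-x₀ ^ 2 / (4 * t)) * Real.exp (-(2 * t) ^ m * r ^ 2 / 2)
            ≤ Real.exp (-lam * t) * (x₀ / (2 * Real.sqrt Real.pi * t ^ ((3:ℝ)/2)))
              * (32 * t ^ ((3:ℝ)/2) / x₀ ^ 3) * (t ^ (-(1:ℝ)/2) * r ^ (-(1:ℝ)/m)) :=
              mul_le_mul (mul_le_mul_of_nonneg_left hE1 hAB) hE2 (Real.exp_nonneg _)
                (mul_nonneg hAB (by positivity))
          _ = (16 / Real.sqrt Real.pi * (x₀⁻¹) ^ 2 * r ^ (-(1:ℝ)/m))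
              * (t ^ (-(1:ℝ)/2) * Real.exp (-lam * t)) := by
              have hsne : t ^ ((3:ℝ)/2) ≠ 0 := ne_of_gt hs
              field_simp
              ring
    refine hmono.trans ?_
    rw [MeasureTheory.integral_const_mul, ← hKdef]
    exact le_of_eq (by ring)
  -- conclude
  have hx2 : x₀ ^ (-2:ℝ) = (x₀⁻¹) ^ 2 := by
    rw [Real.rpow_neg hx.le, show (2:ℝ) = ((2:ℕ):ℝ) by norm_num, Real.rpow_natCast, inv_pow]
  have hx4 : x₀ ^ (-4:ℝ) = (x₀⁻¹) ^ 4 := by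
    rw [Real.rpow_neg hx.le, show (4:ℝ) = ((4:ℕ):ℝ) by norm_num, Real.rpow_natCast, inv_pow]
  constructor
  · intro _
    have hle : ellipticFT m lam x₀ y ≤ C * x₀⁻¹ := by
      refine hb1.trans ?_
      rw [show 2 * K / (Real.sqrt Real.pi * x₀) = (2 * K / Real.sqrt Real.pi) * x₀⁻¹ by
        field_simp]
      refine mul_le_mul_of_nonneg_right ?_ (inv_nonneg.mpr hx.le)
      rw [hCdef]
      exact (div_le_div_iff_of_pos_right hπ).mpr (by linarith)
    rw [hx2, ← mul_pow]
    exact pow_le_pow_left₀ hI0 hle 2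
  · intro hr
    have hrpos : (0:ℝ) < r := lt_trans one_pos hr
    have hrθ0 : (0:ℝ) ≤ r ^ (-(1:ℝ)/m) := Real.rpow_nonneg hr0 _
    have hrθ1 : r ^ (-(1:ℝ)/m) ≤ 1 :=
      Real.rpow_le_one_of_one_le_of_nonpos hr.le
        (div_nonpos_of_nonpos_of_nonneg (by norm_num) hmR.le)
    have hle2 : ellipticFT m lam x₀ y ≤ C * (x₀⁻¹) ^ 2 * r ^ (-(1:ℝ)/m) := by
      refine (hb2 hr).trans ?_
      refine mul_le_mul_of_nonneg_right (mul_le_mul_of_nonneg_right ?_ (by positivity)) hrθ0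
      rw [hCdef]
      exact (div_le_div_iff_of_pos_right hπ).mpr (by linarith)
    calc (ellipticFT m lam x₀ y) ^ 2 ≤ (C * (x₀⁻¹) ^ 2 * r ^ (-(1:ℝ)/m)) ^ 2 :=
          pow_le_pow_left₀ hI0 hle2 2
      _ = C ^ 2 * (x₀⁻¹) ^ 4 * (r ^ (-(1:ℝ)/m) * r ^ (-(1:ℝ)/m)) := by ring
      _ ≤ C ^ 2 * (x₀⁻¹) ^ 4 * (r ^ (-(1:ℝ)/m) * 1) := by
          refine mul_le_mul_of_nonneg_left (mul_le_mul_of_nonneg_left hrθ1 hrθ0) (by positivity)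
      _ = C ^ 2 * x₀ ^ (-4:ℝ) * r ^ (-(1:ℝ)/m) := by rw [hx4]; ring
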